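/- Let n ≥ 1, let E : Fin n → ℝ be energy levels, β > 0, and let τ be the associated Gibbs distribution. For probability vectors p and q on Fin n, the following are equivalent: (a) the thermomajorization curves of (p, E) and (q, E) at inverse temperature β coincide, i.e., for every real k > 0, ∑ over {i | p i * Real.exp (β * E i) = k} of p i equals ∑ over {i | q i * Real.exp (β * E i) = k} of q i; (b) there exists a stochastic matrix G with G · τ = τ and G · p = q, and moreover D₁(p‖τ) = D₁(q‖τ). -/

import Mathlib

open Finset

/-- Kullback–Leibler divergence `D₁(p‖q)`. -/
noncomputable def D1 {S : Type*} [Fintype S] (p q : S → ℝ) : ℝ :=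
  ∑ x ∈ Finset.univ.filter (fun x => p x ≠ 0), p x * Real.log (p x / q x)

/-- The thermomajorization curves of `(a, F)` and `(b, F)` at inverse temperature `β`
coincide: for every positive slope `k`, the total probability mass on segments of
slope `k` agrees. -/
def CurvesCoincide {Y : Type*} [Fintype Y] (β : ℝ) (F : Y → ℝ) (a b : Y → ℝ) : Prop :=
  ∀ k : ℝ, 0 < k →
    ∑ y ∈ Finset.univ.filter (fun y => a y * Real.exp (β * F y) = k), a y =
    ∑ y ∈ Finset.univ.filter (fun y => b y * Real.exp (β * F y) = k), b y

section Aux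

variable {S : Type*} [Fintype S]

/-- For `c > 0`, the nonzero-ratio fiber equals the proportionality class. -/
lemma tm_ratio_filter (τ a : S → ℝ) (hτ : ∀ i, 0 < τ i) (c : ℝ) (hc : 0 < c) :
    univ.filter (fun x => a x ≠ 0 ∧ a x / τ x = c) =
      univ.filter (fun x => a x = c * τ x) := by
  classical
  ext x
  simp only [mem_filter, mem_univ, true_and]
  constructor
  · rintro ⟨_, h2⟩
    rw [div_eq_iff (hτ x).ne'] at h2
    rw [h2, mul_comm]
  · intro h
    refine ⟨by rw [h]; exact (mul_pos hc (hτ x)).ne', ?_⟩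
    rw [h, mul_div_assoc, div_self (hτ x).ne', mul_one]

/-- Extend positive-class τ-mass equality to all classes (including `c = 0`). -/
lemma tm_mass_all (τ p q : S → ℝ) (hτ : ∀ i, 0 < τ i) (hτ1 : ∑ i, τ i = 1)
    (hp0 : ∀ i, 0 ≤ p i) (hq0 : ∀ i, 0 ≤ q i)
    (hpos : ∀ c : ℝ, 0 < c →
      ∑ x ∈ univ.filter (fun x => p x = c * τ x), τ x =
      ∑ x ∈ univ.filter (fun x => q x = c * τ x), τ x) :
    ∀ c : ℝ, ∑ x ∈ univ.filter (fun x => p x = c * τ x), τ x =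
      ∑ x ∈ univ.filter (fun x => q x = c * τ x), τ x := by
  classical
  -- fiberwise (nonzero) masses agree for every c
  have hfib : ∀ (a : S → ℝ), (∀ i, 0 ≤ a i) → ∀ c : ℝ,
      ∑ x ∈ univ.filter (fun x => a x ≠ 0 ∧ a x / τ x = c), τ x =
        if 0 < c then ∑ x ∈ univ.filter (fun x => a x = c * τ x), τ x else 0 := by
    intro a ha c
    by_cases hc : 0 < c
    · rw [tm_ratio_filter τ a hτ c hc, if_pos hc]
    · rw [if_neg hc]
      apply Finset.sum_eq_zero
      intro x hx
      simp only [mem_filter, mem_univ, true_and] at hx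
      exfalso
      have h1 : 0 < a x / τ x := by
        rcases (ha x).lt_or_eq with h | h
        · exact div_pos h (hτ x)
        · exact absurd h.symm hx.1
      rw [hx.2] at h1; exact hc h1
  intro c
  rcases lt_trichotomy c 0 with hc | hc | hc
  · -- negative class: both empty
    have he : ∀ (a : S → ℝ), (∀ i, 0 ≤ a i) →
        univ.filter (fun x => a x = c * τ x) = ∅ := by
      intro a ha
      apply Finset.filter_eq_empty_iff.2
      intro x _ h
      have : c * τ x < 0 := mul_neg_of_neg_of_pos hc (hτ x)
      exact absurd (h ▸ ha x) (not_le.2 this)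
    rw [he p hp0, he q hq0]
  · -- zero class
    subst hc
    have hz : ∀ (a : S → ℝ),
        univ.filter (fun x => a x = 0 * τ x) = univ.filter (fun x => a x = 0) := by
      intro a; apply Finset.filter_congr; intro x _; simp
    rw [hz p, hz q]
    -- reduce to nonzero masses
    have hsplit : ∀ (a : S → ℝ),
        ∑ x ∈ univ.filter (fun x => a x = 0), τ x
          = 1 - ∑ x ∈ univ.filter (fun x => a x ≠ 0), τ x := by
      intro a
      have := Finset.sum_filter_add_sum_filter_not univ (fun x => a x = 0) τ
      rw [hτ1] at this
      have h2 : univ.filter (fun x => ¬ a x = 0) = univ.filter (fun x => a x ≠ 0) := rfl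
      linarith [this]
    rw [hsplit p, hsplit q]
    -- fiberwise decomposition of nonzero masses
    set t : Finset ℝ := (univ.image fun x => p x / τ x) ∪ (univ.image fun x => q x / τ x)
      with ht
    have hmem : ∀ (a : S → ℝ), (∀ x : S, a x / τ x ∈ t) →
        ∑ x ∈ univ.filter (fun x => a x ≠ 0), τ x
          = ∑ c ∈ t, ∑ x ∈ univ.filter (fun x => a x ≠ 0 ∧ a x / τ x = c), τ x := by
      intro a hmt
      rw [← Finset.sum_fiberwise_of_maps_to (g := fun x => a x / τ x)
        (fun x _ => hmt x) τ]
      apply Finset.sum_congr rfl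
      intro c _
      rw [Finset.filter_filter]
    have hmp : ∀ x : S, p x / τ x ∈ t := fun x => by
      rw [ht]; exact Finset.mem_union_left _ (Finset.mem_image_of_mem _ (mem_univ x))
    have hmq : ∀ x : S, q x / τ x ∈ t := fun x => by
      rw [ht]; exact Finset.mem_union_right _ (Finset.mem_image_of_mem _ (mem_univ x))
    rw [hmem p hmp, hmem q hmq]
    congr 1
    apply Finset.sum_congr rfl
    intro c _
    rw [hfib p hp0 c, hfib q hq0 c]
    by_cases hc : 0 < c
    · rw [if_pos hc, if_pos hc]; exact hpos c hc
    · rw [if_neg hc, if_neg hc]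
  · exact hpos c hc

end Aux
section Aux2
variable {S : Type*} [Fintype S]

/-- Forward direction: construct a Gibbs-preserving stochastic matrix mapping p to q. -/
lemma tm_exists_G (τ p q : S → ℝ) (hτ : ∀ i, 0 < τ i)
    (hmass : ∀ c : ℝ, ∑ x ∈ univ.filter (fun x => p x = c * τ x), τ x =
      ∑ x ∈ univ.filter (fun x => q x = c * τ x), τ x) :
    ∃ G : S → S → ℝ,
      (∀ i j, 0 ≤ G i j) ∧ (∀ j, ∑ i, G i j = 1) ∧
      (∀ i, ∑ j, G i j * τ j = τ i) ∧
      (∀ i, ∑ j, G i j * p j = q i) := by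
  classical
  have hfilt : ∀ (a : S → ℝ) (u v : ℝ), v ≠ 0 →
      univ.filter (fun x => a x * v = u * τ x) =
        univ.filter (fun x => a x = (u / v) * τ x) := by
    intro a u v hv
    apply Finset.filter_congr
    intro x _
    rw [div_mul_eq_mul_div, eq_div_iff hv]
  set D : S → ℝ := fun j => ∑ x ∈ univ.filter (fun x => q x * τ j = p j * τ x), τ x
    with hD
  have hDpos : ∀ j, 0 < D j := by
    intro j
    have hDalt : D j = ∑ x ∈ univ.filter (fun x => q x = (p j / τ j) * τ x), τ x := by
      simp only [hD]
      rw [hfilt q (p j) (τ j) (hτ j).ne']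
    rw [hDalt, ← hmass (p j / τ j)]
    have hjmem : j ∈ univ.filter (fun x => p x = (p j / τ j) * τ x) := by
      simp only [mem_filter, mem_univ, true_and]
      rw [div_mul_eq_mul_div, mul_div_assoc, div_self (hτ j).ne', mul_one]
    calc (0:ℝ) < τ j := hτ j
      _ ≤ _ := Finset.single_le_sum (fun x _ => (hτ x).le) hjmem
  -- the common per-row quantities
  set Di : S → ℝ := fun i => ∑ x ∈ univ.filter (fun x => q x * τ i = q i * τ x), τ x
    with hDi
  have hDconst : ∀ i j, q i * τ j = p j * τ i → D j = Di i := by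
    intro i j h
    show (∑ x ∈ univ.filter (fun x => q x * τ j = p j * τ x), τ x)
      = ∑ x ∈ univ.filter (fun x => q x * τ i = q i * τ x), τ x
    congr 1
    apply Finset.filter_congr
    intro x _
    constructor
    · intro hx
      apply mul_right_cancel₀ (hτ j).ne'
      linear_combination τ i * hx - τ x * h
    · intro hx
      apply mul_right_cancel₀ (hτ i).ne'
      linear_combination τ j * hx + τ x * h
  have hDipos : ∀ i, 0 < Di i := by
    intro i
    have himem : i ∈ univ.filter (fun x => q x * τ i = q i * τ x) := by
      simp [mem_filter]
    calc (0:ℝ) < τ i := hτ i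
      _ ≤ _ := Finset.single_le_sum (fun x _ => (hτ x).le) himem
  have hFimass : ∀ i, ∑ j ∈ univ.filter (fun j => q i * τ j = p j * τ i), τ j = Di i := by
    intro i
    have h1 : univ.filter (fun j => q i * τ j = p j * τ i) =
        univ.filter (fun j => p j * τ i = q i * τ j) := by
      apply Finset.filter_congr; intro x _; simp [eq_comm]
    rw [h1, hfilt p (q i) (τ i) (hτ i).ne', hmass (q i / τ i),
      ← hfilt q (q i) (τ i) (hτ i).ne']
  refine ⟨fun i j => if q i * τ j = p j * τ i then τ i / D j else 0, ?_, ?_, ?_, ?_⟩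
  · intro i j
    dsimp only
    split
    · exact div_nonneg (hτ i).le (hDpos j).le
    · exact le_rfl
  · intro j
    rw [← Finset.sum_filter, ← Finset.sum_div]
    exact div_self (hDpos j).ne'
  · intro i
    have h1 : ∀ j : S, (if q i * τ j = p j * τ i then τ i / D j else 0) * τ j
        = if q i * τ j = p j * τ i then τ i / Di i * τ j else 0 := by
      intro j
      split
      · next h => rw [hDconst i j h]
      · rw [zero_mul]
    simp_rw [h1]
    rw [← Finset.sum_filter, ← Finset.mul_sum, hFimass i,
      div_mul_cancel₀ _ (hDipos i).ne']
  · intro i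
    have h1 : ∀ j ∈ univ.filter (fun j => q i * τ j = p j * τ i),
        τ i / D j * p j = q i / Di i * τ j := by
      intro j hj
      simp only [mem_filter, mem_univ, true_and] at hj
      rw [hDconst i j hj]
      have hpj : p j = q i * τ j / τ i := by
        rw [eq_div_iff (hτ i).ne', ← hj]
      rw [hpj]
      field_simp
      rw [mul_assoc (τ i), mul_div_mul_left _ _ (hτ i).ne']
    have h2 : ∀ j : S, (if q i * τ j = p j * τ i then τ i / D j else 0) * p j
        = if q i * τ j = p j * τ i then τ i / D j * p j else 0 := by
      intro j; split <;> simp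
    simp_rw [h2]
    rw [← Finset.sum_filter, Finset.sum_congr rfl h1, ← Finset.mul_sum, hFimass i,
      div_mul_cancel₀ _ (hDipos i).ne']

end Aux2
section Aux3
variable {S : Type*} [Fintype S]

lemma tm_D1_eq (τ p q : S → ℝ) (hτ : ∀ i, 0 < τ i)
    (hp0 : ∀ i, 0 ≤ p i) (hq0 : ∀ i, 0 ≤ q i)
    (hmass : ∀ c : ℝ, ∑ x ∈ univ.filter (fun x => p x = c * τ x), τ x =
      ∑ x ∈ univ.filter (fun x => q x = c * τ x), τ x) :
    D1 p τ = D1 q τ := by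
  classical
  set t : Finset ℝ := (univ.image fun x => p x / τ x) ∪ (univ.image fun x => q x / τ x)
    with ht
  have key : ∀ (a : S → ℝ), (∀ i, 0 ≤ a i) → (∀ x : S, a x / τ x ∈ t) →
      D1 a τ = ∑ c ∈ t, (c * Real.log c) *
        ∑ x ∈ univ.filter (fun x => a x = c * τ x), τ x := by
    intro a ha0 hmt
    rw [D1, ← Finset.sum_fiberwise_of_maps_to (g := fun x => a x / τ x)
      (t := t) (fun x _ => hmt x) (fun x => a x * Real.log (a x / τ x))]
    apply Finset.sum_congr rfl
    intro c _
    rw [Finset.filter_filter]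
    by_cases hc : 0 < c
    · rw [tm_ratio_filter τ a hτ c hc, Finset.mul_sum]
      apply Finset.sum_congr rfl
      intro x hx
      simp only [mem_filter, mem_univ, true_and] at hx
      rw [hx, mul_div_assoc, div_self (hτ x).ne', mul_one]
      ring
    · have hL : univ.filter (fun x => a x ≠ 0 ∧ a x / τ x = c) = ∅ := by
        apply Finset.filter_eq_empty_iff.2
        intro x _
        rintro ⟨h1, h2⟩
        have : 0 < a x / τ x := by
          rcases (ha0 x).lt_or_eq with h | h
          · exact div_pos h (hτ x)
          · exact absurd h.symm h1
        rw [h2] at this; exact hc this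
      rw [hL, Finset.sum_empty]
      rcases (not_lt.1 hc).lt_or_eq with h | h
      · have hR : univ.filter (fun x => a x = c * τ x) = ∅ := by
          apply Finset.filter_eq_empty_iff.2
          intro x _ hx
          have : c * τ x < 0 := mul_neg_of_neg_of_pos h (hτ x)
          exact absurd (hx ▸ ha0 x) (not_le.2 this)
        rw [hR, Finset.sum_empty, mul_zero]
      · subst h; simp
  have hmp : ∀ x : S, p x / τ x ∈ t := fun x => by
    rw [ht]; exact Finset.mem_union_left _ (Finset.mem_image_of_mem _ (mem_univ x))
  have hmq : ∀ x : S, q x / τ x ∈ t := fun x => by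
    rw [ht]; exact Finset.mem_union_right _ (Finset.mem_image_of_mem _ (mem_univ x))
  rw [key p hp0 hmp, key q hq0 hmq]
  apply Finset.sum_congr rfl
  intro c _
  rw [hmass c]

end Aux3
section Aux4
variable {S : Type*} [Fintype S]

lemma tm_backward (τ p q : S → ℝ) (hτ : ∀ i, 0 < τ i)
    (hp0 : ∀ i, 0 ≤ p i) (hq0 : ∀ i, 0 ≤ q i)
    (G : S → S → ℝ) (hG0 : ∀ i j, 0 ≤ G i j) (hGcol : ∀ j, ∑ i, G i j = 1)
    (hGτ : ∀ i, ∑ j, G i j * τ j = τ i) (hGp : ∀ i, ∑ j, G i j * p j = q i)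
    (hD : D1 p τ = D1 q τ) :
    ∀ c : ℝ, 0 < c →
      ∑ x ∈ univ.filter (fun x => p x = c * τ x), p x =
      ∑ x ∈ univ.filter (fun x => q x = c * τ x), q x := by
  classical
  set φ : ℝ → ℝ := fun x => x * Real.log x with hφ
  set w : S → S → ℝ := fun i j => G i j * τ j / τ i with hw
  have hw0 : ∀ i j, 0 ≤ w i j := fun i j =>
    div_nonneg (mul_nonneg (hG0 i j) (hτ j).le) (hτ i).le
  have hw1 : ∀ i, ∑ j, w i j = 1 := by
    intro i
    rw [hw]
    simp only
    rw [← Finset.sum_div, hGτ i, div_self (hτ i).ne']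
  have hsum_x : ∀ i, ∑ j, w i j * (p j / τ j) = q i / τ i := by
    intro i
    have h1 : ∀ j : S, w i j * (p j / τ j) = G i j * p j / τ i := by
      intro j
      rw [hw]
      simp only
      have h2 := (hτ i).ne'
      have h3 := (hτ j).ne'
      field_simp
    simp_rw [h1]
    rw [← Finset.sum_div, hGp i]
  -- Jensen inequality, per row
  have hjen : ∀ i, φ (q i / τ i) ≤ ∑ j, w i j * φ (p j / τ j) := by
    intro i
    have := Real.convexOn_mul_log.map_sum_le (t := univ) (w := w i)
      (p := fun j => p j / τ j) (fun j _ => hw0 i j) (hw1 i)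
      (fun j _ => Set.mem_Ici.2 (div_nonneg (hp0 j) (hτ j).le))
    simp_rw [smul_eq_mul] at this
    rw [hsum_x i] at this
    exact this
  -- the D1 identity
  have hD1id : ∀ a : S → ℝ, D1 a τ = ∑ i, τ i * φ (a i / τ i) := by
    intro a
    rw [D1, Finset.sum_filter_of_ne (by intro x _ hx h; rw [h, zero_mul] at hx; exact hx rfl)]
    apply Finset.sum_congr rfl
    intro i _
    rcases eq_or_ne (a i) 0 with h | h
    · simp [h, hφ]
    · rw [hφ]
      simp only
      set L := Real.log (a i / τ i) with hL
      have h2 := (hτ i).ne'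
      field_simp
  -- total equality forces per-row equality
  have hswap : ∑ i, τ i * ∑ j, w i j * φ (p j / τ j) = ∑ j, τ j * φ (p j / τ j) := by
    have h1 : ∀ i, τ i * ∑ j, w i j * φ (p j / τ j)
        = ∑ j, G i j * (τ j * φ (p j / τ j)) := by
      intro i
      rw [Finset.mul_sum]
      apply Finset.sum_congr rfl
      intro j _
      rw [hw]
      simp only
      have h2 := (hτ i).ne'
      have h3 := (hτ j).ne'
      field_simp
    simp_rw [h1]
    rw [Finset.sum_comm]
    apply Finset.sum_congr rfl
    intro j _
    rw [← Finset.sum_mul, hGcol j, one_mul]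
  have hzero : ∑ i, (τ i * (∑ j, w i j * φ (p j / τ j)) - τ i * φ (q i / τ i)) = 0 := by
    rw [Finset.sum_sub_distrib, hswap, ← hD1id p, ← hD1id q, hD, sub_self]
  have hterm : ∀ i, τ i * (∑ j, w i j * φ (p j / τ j)) - τ i * φ (q i / τ i) = 0 := by
    intro i
    have := (Finset.sum_eq_zero_iff_of_nonneg (fun i _ => by
      have := hjen i
      nlinarith [hτ i])).1 hzero i (mem_univ i)
    exact this
  have heq : ∀ i, φ (∑ j, w i j * (p j / τ j)) = ∑ j, w i j * φ (p j / τ j) := by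
    intro i
    rw [hsum_x i]
    have h := hterm i
    have h2 : τ i * (∑ j, w i j * φ (p j / τ j)) = τ i * φ (q i / τ i) := by linarith
    have := mul_left_cancel₀ (hτ i).ne' h2
    linarith [this]
  -- strict convexity: equality case
  have key : ∀ i j, G i j ≠ 0 → p j * τ i = q i * τ j := by
    intro i j hGij
    have hiff := (Real.strictConvexOn_mul_log.map_sum_eq_iff' (t := univ) (w := w i)
      (p := fun j => p j / τ j) (fun j _ => hw0 i j) (hw1 i)
      (fun j _ => Set.mem_Ici.2 (div_nonneg (hp0 j) (hτ j).le)))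
    have hLHS : φ (∑ j ∈ univ, w i j • (p j / τ j)) = ∑ j ∈ univ, w i j • φ (p j / τ j) := by
      simp_rw [smul_eq_mul]
      exact heq i
    have hwij : w i j ≠ 0 := by
      rw [hw]
      simp only
      have hGpos : 0 < G i j := (hG0 i j).lt_of_ne (Ne.symm hGij)
      exact ne_of_gt (div_pos (mul_pos hGpos (hτ j)) (hτ i))
    have := hiff.1 hLHS j (mem_univ j) hwij
    simp_rw [smul_eq_mul] at this
    rw [hsum_x i] at this
    rw [div_eq_div_iff (hτ j).ne' (hτ i).ne'] at this
    exact this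
  -- transport of mass
  intro c hc
  have h1 : ∑ x ∈ univ.filter (fun x => q x = c * τ x), q x
      = ∑ j, (∑ x ∈ univ.filter (fun x => q x = c * τ x), G x j) * p j := by
    rw [Finset.sum_congr rfl (fun x _ => (hGp x).symm), Finset.sum_comm]
    apply Finset.sum_congr rfl
    intro j _
    rw [Finset.sum_mul]
  rw [h1]
  have h2 : ∀ j : S, (∑ x ∈ univ.filter (fun x => q x = c * τ x), G x j) * p j
      = if p j = c * τ j then p j else 0 := by
    intro j
    by_cases hpj : p j = c * τ j
    · rw [if_pos hpj]
      have hsum : ∑ x ∈ univ.filter (fun x => q x = c * τ x), G x j = 1 := by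
        rw [← hGcol j]
        apply Finset.sum_subset (Finset.filter_subset _ _)
        intro x _ hx
        by_contra hGx
        apply hx
        simp only [mem_filter, mem_univ, true_and]
        have hk := key x j hGx
        rw [hpj] at hk
        have : q x * τ j = c * τ x * τ j := by linarith [hk]
        have := mul_right_cancel₀ (hτ j).ne' this
        exact this
      rw [hsum, one_mul]
    · rw [if_neg hpj]
      rcases eq_or_ne (p j) 0 with h | h
      · rw [h, mul_zero]
      · have hsum : ∑ x ∈ univ.filter (fun x => q x = c * τ x), G x j = 0 := by
          apply Finset.sum_eq_zero
          intro x hx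
          simp only [mem_filter, mem_univ, true_and] at hx
          by_contra hGx
          apply hpj
          have hk := key x j hGx
          rw [hx] at hk
          have : p j * τ x = c * τ j * τ x := by linarith [hk]
          exact mul_right_cancel₀ (hτ x).ne' this
        rw [hsum, zero_mul]
  rw [Finset.sum_congr rfl (fun j _ => h2 j), ← Finset.sum_filter]

end Aux4

/-- Theorem 1: coincidence of thermomajorization curves is equivalent to the existence
of a Gibbs-preserving stochastic map sending `p` to `q` with zero entropy production. -/
theorem thermomajorization_coincide_iff_zero_entropy_production
    {n : ℕ} (hn : 1 ≤ n) (E : Fin n → ℝ) (β : ℝ) (hβ : 0 < β)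
    (τ : Fin n → ℝ)
    (hτ : ∀ i, τ i = Real.exp (-β * E i) / ∑ j, Real.exp (-β * E j))
    (p q : Fin n → ℝ)
    (hp0 : ∀ i, 0 ≤ p i) (hp1 : ∑ i, p i = 1)
    (hq0 : ∀ i, 0 ≤ q i) (hq1 : ∑ i, q i = 1) :
    CurvesCoincide β E p q ↔
      ((∃ G : Fin n → Fin n → ℝ,
          (∀ i j, 0 ≤ G i j) ∧ (∀ j, ∑ i, G i j = 1) ∧
          (∀ i, ∑ j, G i j * τ j = τ i) ∧
          (∀ i, ∑ j, G i j * p j = q i)) ∧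
        D1 p τ = D1 q τ) := by
  classical
  have hne : Nonempty (Fin n) := ⟨⟨0, by omega⟩⟩
  set Z : ℝ := ∑ j, Real.exp (-β * E j) with hZdef
  have hZ : 0 < Z := Finset.sum_pos (fun j _ => Real.exp_pos _) Finset.univ_nonempty
  have hτpos : ∀ i, 0 < τ i := by
    intro i
    rw [hτ i]
    exact div_pos (Real.exp_pos _) hZ
  have hτ1 : ∑ i, τ i = 1 := by
    rw [Finset.sum_congr rfl (fun i _ => hτ i), ← Finset.sum_div]
    exact div_self hZ.ne'
  have bridge : ∀ (a : Fin n → ℝ) (k : ℝ),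
      univ.filter (fun y => a y * Real.exp (β * E y) = k) =
        univ.filter (fun y => a y = (k * Z) * τ y) := by
    intro a k
    apply Finset.filter_congr
    intro y _
    have h1 : (k * Z) * τ y = k * Real.exp (-β * E y) := by
      rw [hτ y]
      field_simp
    rw [h1, neg_mul, Real.exp_neg, eq_mul_inv_iff_mul_eq₀ (Real.exp_ne_zero _)]
  have hCCiff : CurvesCoincide β E p q ↔ ∀ c : ℝ, 0 < c →
      ∑ x ∈ univ.filter (fun x => p x = c * τ x), p x =
      ∑ x ∈ univ.filter (fun x => q x = c * τ x), q x := by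
    constructor
    · intro hCC c hc
      have h := hCC (c / Z) (div_pos hc hZ)
      rw [bridge p, bridge q, div_mul_cancel₀ _ hZ.ne'] at h
      exact h
    · intro h k hk
      rw [bridge p, bridge q]
      exact h (k * Z) (mul_pos hk hZ)
  rw [hCCiff]
  constructor
  · intro hCC
    have hpos : ∀ c : ℝ, 0 < c →
        ∑ x ∈ univ.filter (fun x => p x = c * τ x), τ x =
        ∑ x ∈ univ.filter (fun x => q x = c * τ x), τ x := by
      intro c hc
      have h := hCC c hc
      have hp' : ∑ x ∈ univ.filter (fun x => p x = c * τ x), p x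
          = c * ∑ x ∈ univ.filter (fun x => p x = c * τ x), τ x := by
        rw [Finset.mul_sum]
        apply Finset.sum_congr rfl
        intro x hx
        simp only [mem_filter, mem_univ, true_and] at hx
        exact hx
      have hq' : ∑ x ∈ univ.filter (fun x => q x = c * τ x), q x
          = c * ∑ x ∈ univ.filter (fun x => q x = c * τ x), τ x := by
        rw [Finset.mul_sum]
        apply Finset.sum_congr rfl
        intro x hx
        simp only [mem_filter, mem_univ, true_and] at hx
        exact hx
      rw [hp', hq'] at h
      exact mul_left_cancel₀ hc.ne' h
    have hmass := tm_mass_all τ p q hτpos hτ1 hp0 hq0 hpos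
    exact ⟨tm_exists_G τ p q hτpos hmass, tm_D1_eq τ p q hτpos hp0 hq0 hmass⟩
  · rintro ⟨⟨G, hG0, hGcol, hGτ, hGp⟩, hD⟩
    exact tm_backward τ p q hτpos hp0 hq0 G hG0 hGcol hGτ hGp hD
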